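/- For a standard Brownian motion W and a > 0, the first hitting time T_a = inf{t : W(t) = a} satisfies P(T_a ≤ τ) = 2 P(W(τ) ≥ a) for every τ > 0. -/

import Mathlib

open MeasureTheory
open scoped ENNReal NNReal

/-- A standard one-dimensional Brownian motion (started at `0`): measurable marginals,
a.s. zero start, a.s. continuous paths, Gaussian increments `W_t - W_s ~ N(0, t-s)`,
and independent increments over any increasing sequence of times. -/
def IsBrownianMotion {Ω : Type*} [MeasurableSpace Ω] (P : Measure Ω)
    (W : ℝ → Ω → ℝ) : Prop :=
  (∀ t : ℝ, Measurable (W t)) ∧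
  (∀ᵐ ω ∂P, W 0 ω = 0) ∧
  (∀ᵐ ω ∂P, Continuous fun t => W t ω) ∧
  (∀ s t : ℝ, 0 ≤ s → s ≤ t →
    Measure.map (fun ω => W t ω - W s ω) P =
      ProbabilityTheory.gaussianReal 0 ((t - s).toNNReal)) ∧
  (∀ (n : ℕ) (t : ℕ → ℝ), Monotone t → 0 ≤ t 0 →
    ProbabilityTheory.iIndepFun
      (fun (i : Fin n) ω => W (t (i + 1)) ω - W (t i) ω) P)

section BMReflPrelude
open ProbabilityTheory Set Filter
open scoped Topology
set_option linter.unusedSectionVars false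
set_option linter.unusedVariables false
set_option linter.unnecessarySeqFocus false
set_option linter.unusedTactic false

namespace BMRefl

variable {N : ℕ} {v : ℝ≥0}

/-- partial sum of first `k` coordinates -/
noncomputable def S (N k : ℕ) (x : Fin N → ℝ) : ℝ :=
  ∑ i : Fin N, if (i : ℕ) < k then x i else 0

/-- reflection of coordinates from index `k` on -/
def R (N k : ℕ) (x : Fin N → ℝ) : Fin N → ℝ :=
  fun i => if (i : ℕ) < k then x i else -x i

def A (N : ℕ) (a : ℝ) (k : ℕ) : Set (Fin N → ℝ) :=
  {x | (∀ j < k, S N j x < a) ∧ a ≤ S N k x}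

def H (N : ℕ) (a : ℝ) : Set (Fin N → ℝ) := {x | ∃ k ≤ N, a ≤ S N k x}

def Cset (N : ℕ) (ε : ℝ) : Set (Fin N → ℝ) := {x | ∃ i : Fin N, ε < |x i|}

lemma measurable_S (N k : ℕ) : Measurable (S N k) := by
  apply Finset.measurable_sum
  intro i _
  by_cases h : (i : ℕ) < k <;> simp [h, measurable_pi_apply]

lemma measurable_R (N k : ℕ) : Measurable (R N k) := by
  apply measurable_pi_lambda
  intro i
  by_cases h : (i : ℕ) < k <;> simp [R, h, measurable_pi_apply, (measurable_pi_apply i).neg]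

lemma measurableSet_A (N : ℕ) (a : ℝ) (k : ℕ) : MeasurableSet (A N a k) := by
  have : A N a k = (⋂ j ∈ Finset.range k, {x | S N j x < a}) ∩ {x | a ≤ S N k x} := by
    ext x; simp [A]
  rw [this]
  exact (MeasurableSet.biInter (Finset.range k).countable_toSet
      (fun j _ => measurableSet_lt (measurable_S N j) measurable_const)).inter
    (measurableSet_le measurable_const (measurable_S N k))

lemma measurableSet_H (N : ℕ) (a : ℝ) : MeasurableSet (H N a) := by
  have : H N a = ⋃ k ∈ Finset.range (N+1), {x | a ≤ S N k x} := by
    ext x; simp [H, Nat.lt_succ_iff]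
  rw [this]
  exact MeasurableSet.biUnion (Finset.range (N+1)).countable_toSet
    (fun k _ => measurableSet_le measurable_const (measurable_S N k))

lemma measurableSet_Cset (N : ℕ) (ε : ℝ) : MeasurableSet (Cset N ε) := by
  have : Cset N ε = ⋃ i : Fin N, {x | ε < |x i|} := by ext x; simp [Cset]
  rw [this]
  exact MeasurableSet.iUnion fun i =>
    measurableSet_lt measurable_const (measurable_pi_apply i).abs

noncomputable def μpi (N : ℕ) (v : ℝ≥0) : Measure (Fin N → ℝ) :=
  Measure.pi fun _ => gaussianReal 0 v

instance : IsProbabilityMeasure (μpi N v) := by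
  unfold μpi; infer_instance

lemma gauss_neg (v : ℝ≥0) :
    Measure.map (fun x : ℝ => -x) (gaussianReal 0 v) = gaussianReal 0 v := by
  have h := gaussianReal_map_const_mul (μ := 0) (v := v) (-1)
  simp only [neg_one_mul] at h
  rw [h]; norm_num

lemma map_R (k : ℕ) : Measure.map (R N k) (μpi N v) = μpi N v := by
  symm
  unfold μpi
  apply Measure.pi_eq
  intro s hs
  rw [Measure.map_apply (measurable_R N k) (MeasurableSet.univ_pi hs)]
  have hpre : (R N k) ⁻¹' (Set.pi univ s) =
      Set.pi univ (fun (i : Fin N) => if (i : ℕ) < k then s i else (fun y : ℝ => -y) ⁻¹' s i) := by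
    ext x
    simp only [mem_preimage, mem_univ_pi, R]
    refine forall_congr' fun i => ?_
    by_cases h : (i : ℕ) < k <;> simp [h]
  rw [hpre, Measure.pi_pi]
  refine Finset.prod_congr rfl fun i _ => ?_
  by_cases h : (i : ℕ) < k
  · simp [h]
  · simp only [h, if_false]
    conv_rhs => rw [← gauss_neg v]
    rw [Measure.map_apply (measurable_neg) (hs i)]


lemma S_zero (x : Fin N → ℝ) : S N 0 x = 0 := by simp [S]

lemma S_R_of_le {j k : ℕ} (hjk : j ≤ k) (x : Fin N → ℝ) : S N j (R N k x) = S N j x := by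
  unfold S R
  refine Finset.sum_congr rfl fun i _ => ?_
  by_cases h : (i : ℕ) < j
  · simp [h, lt_of_lt_of_le h hjk]
  · simp [h]

lemma S_R_top (k : ℕ) (x : Fin N → ℝ) :
    S N N (R N k x) = 2 * S N k x - S N N x := by
  unfold S R
  rw [Finset.mul_sum, ← Finset.sum_sub_distrib]
  refine Finset.sum_congr rfl fun i _ => ?_
  have hi : (i : ℕ) < N := i.2
  by_cases h : (i : ℕ) < k <;> simp [h, hi] <;> ring

lemma S_succ {j : ℕ} (hj : j < N) (x : Fin N → ℝ) :
    S N (j + 1) x = S N j x + x ⟨j, hj⟩ := by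
  unfold S
  have : ∀ i : Fin N, (if (i : ℕ) < j + 1 then x i else 0) =
      (if (i : ℕ) < j then x i else 0) + (if i = ⟨j, hj⟩ then x i else 0) := by
    intro i
    rcases lt_trichotomy (i : ℕ) j with h | h | h
    · have h1 : (i : ℕ) < j + 1 := by omega
      have h2 : i ≠ ⟨j, hj⟩ := by intro he; rw [he] at h; simp at h
      simp [h, h1, h2]
    · have h1 : i = ⟨j, hj⟩ := by ext; simp [h]
      simp [h1]
    · have h1 : ¬ ((i : ℕ) < j + 1) := by omega
      have h2 : ¬ ((i : ℕ) < j) := by omega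
      have h3 : i ≠ ⟨j, hj⟩ := by intro he; rw [he] at h; simp at h
      simp [h1, h2, h3]
  rw [Finset.sum_congr rfl (fun i _ => this i), Finset.sum_add_distrib,
    Finset.sum_ite_eq' Finset.univ (⟨j, hj⟩ : Fin N) x]
  simp

lemma reflect_k {a : ℝ} {k : ℕ} (hk : k ≤ N) :
    μpi N v (A N a k ∩ {x | S N N x < a}) =
    μpi N v (A N a k ∩ {x | 2 * S N k x - S N N x < a}) := by
  conv_lhs => rw [← map_R (v := v) k]
  rw [Measure.map_apply (measurable_R N k)
    ((measurableSet_A N a k).inter (measurableSet_lt (measurable_S N N) measurable_const))]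
  congr 1
  ext x
  simp only [mem_inter_iff, mem_preimage, A, mem_setOf_eq]
  have h1 : ∀ j ≤ k, S N j (R N k x) = S N j x := fun j hj => S_R_of_le hj x
  rw [S_R_top k x, h1 k le_rfl]
  constructor
  · rintro ⟨⟨hj, hk'⟩, hS⟩
    exact ⟨⟨fun j hjk => by rw [← h1 j (le_of_lt hjk)]; exact hj j hjk, hk'⟩, hS⟩
  · rintro ⟨⟨hj, hk'⟩, hS⟩
    exact ⟨⟨fun j hjk => by rw [h1 j (le_of_lt hjk)]; exact hj j hjk, hk'⟩, hS⟩

lemma H_subset_iUnion (a : ℝ) : H N a ⊆ ⋃ k ∈ Finset.range (N+1), A N a k := by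
  rintro x ⟨k, hk, hak⟩
  classical
  have hex : ∃ m, a ≤ S N m x := ⟨k, hak⟩
  have hm : a ≤ S N (Nat.find hex) x := Nat.find_spec hex
  have hmk : Nat.find hex ≤ k := Nat.find_min' hex hak
  refine mem_iUnion₂.2 ⟨Nat.find hex, ?_, ?_, hm⟩
  · simp only [Finset.mem_range]; omega
  · exact fun j hj => lt_of_not_ge (Nat.find_min hex hj)

lemma meas_H_inter {a : ℝ} {T : Set (Fin N → ℝ)} (hT : MeasurableSet T) :
    μpi N v (H N a ∩ T) = ∑ k ∈ Finset.range (N+1), μpi N v (A N a k ∩ T) := by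
  have heq : H N a ∩ T = ⋃ k ∈ Finset.range (N+1), (A N a k ∩ T) := by
    apply subset_antisymm
    · rintro x ⟨hx, hxT⟩
      obtain ⟨k, hk, hxk⟩ := mem_iUnion₂.1 (H_subset_iUnion a hx)
      exact mem_iUnion₂.2 ⟨k, hk, hxk, hxT⟩
    · rintro x hx
      obtain ⟨k, hk, hxk, hxT⟩ := mem_iUnion₂.1 hx
      refine ⟨⟨k, ?_, hxk.2⟩, hxT⟩
      simpa [Nat.lt_succ_iff] using hk
  rw [heq, measure_biUnion_finset ?_ (fun k _ => (measurableSet_A N a k).inter hT)]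
  intro k1 h1 k2 h2 hne
  simp only [Function.onFun]
  apply Set.disjoint_left.2
  rintro x ⟨hx1, _⟩ ⟨hx2, _⟩
  rcases Ne.lt_or_gt hne with h | h
  · exact absurd hx1.2 (not_le.2 (hx2.1 k1 h))
  · exact absurd hx2.2 (not_le.2 (hx1.1 k2 h))

lemma upper_bound {a : ℝ} :
    μpi N v (H N a) ≤ 2 * μpi N v {x | a ≤ S N N x} := by
  set μ := μpi N v with hμ
  have hTm : MeasurableSet {x : Fin N → ℝ | S N N x < a} :=
    measurableSet_lt (measurable_S N N) measurable_const
  have hdiff : H N a \ {x | S N N x < a} = H N a ∩ {x | a ≤ S N N x} := by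
    rw [Set.diff_eq]; congr 1; ext x; simp [not_lt]
  have hsplit : μ (H N a) = μ (H N a ∩ {x | S N N x < a}) + μ (H N a ∩ {x | a ≤ S N N x}) := by
    rw [← measure_inter_add_diff (H N a) hTm, hdiff]
  rw [hsplit, meas_H_inter hTm]
  have hstep : ∀ k ∈ Finset.range (N+1),
      μ (A N a k ∩ {x | S N N x < a}) ≤ μ (A N a k ∩ {x | a < S N N x}) := by
    intro k hk
    rw [hμ, reflect_k (Nat.lt_succ_iff.1 (Finset.mem_range.1 hk))]
    apply measure_mono
    rintro x ⟨hxA, hxS⟩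
    refine ⟨hxA, ?_⟩
    have := hxA.2
    simp only [mem_setOf_eq] at hxS ⊢
    linarith
  calc (∑ k ∈ Finset.range (N+1), μ (A N a k ∩ {x | S N N x < a}))
        + μ (H N a ∩ {x | a ≤ S N N x})
      ≤ (∑ k ∈ Finset.range (N+1), μ (A N a k ∩ {x | a < S N N x}))
        + μ {x | a ≤ S N N x} := by
        exact add_le_add (Finset.sum_le_sum hstep) (measure_mono inter_subset_right)
    _ = μ (H N a ∩ {x | a < S N N x}) + μ {x | a ≤ S N N x} := by
        rw [hμ, meas_H_inter (measurableSet_lt measurable_const (measurable_S N N))]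
    _ ≤ μ {x | a ≤ S N N x} + μ {x | a ≤ S N N x} := by
        refine add_le_add (measure_mono ?_) le_rfl
        exact inter_subset_right.trans (Set.setOf_subset_setOf.2 (fun x hx => le_of_lt hx))
    _ = 2 * μ {x | a ≤ S N N x} := (two_mul _).symm

lemma lower_bound {a ε : ℝ} (ha : 0 < a) (hε : 0 < ε) :
    μpi N v {x | a ≤ S N N x} + μpi N v {x | a + 2*ε ≤ S N N x}
      ≤ μpi N v (H N a) + μpi N v (Cset N ε) := by
  set μ := μpi N v with hμ
  set D : Set (Fin N → ℝ) := {x | a + 2*ε ≤ S N N x} ∩ (Cset N ε)ᶜ with hD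
  have hDm : MeasurableSet D :=
    (measurableSet_le measurable_const (measurable_S N N)).inter
      (measurableSet_Cset N ε).compl
  have hDH : D ⊆ H N a := by
    rintro x ⟨hx, _⟩
    exact ⟨N, le_rfl, by simp only [mem_setOf_eq] at hx; linarith⟩
  have hTm : MeasurableSet {x : Fin N → ℝ | S N N x < a} :=
    measurableSet_lt (measurable_S N N) measurable_const
  have hdiff : H N a \ {x | S N N x < a} = H N a ∩ {x | a ≤ S N N x} := by
    rw [Set.diff_eq]; congr 1; ext x; simp [not_lt]
  have hsub : {x : Fin N → ℝ | a ≤ S N N x} ⊆ H N a := fun x hx => ⟨N, le_rfl, hx⟩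
  have h1 : μ (H N a ∩ {x | a ≤ S N N x}) = μ {x | a ≤ S N N x} := by
    rw [Set.inter_eq_right.2 hsub]
  have hAD : ∀ k ∈ Finset.range (N+1), μ (A N a k ∩ D) ≤ μ (A N a k ∩ {x | S N N x < a}) := by
    intro k hk
    have hkN : k ≤ N := Nat.lt_succ_iff.1 (Finset.mem_range.1 hk)
    rw [hμ, reflect_k hkN]
    apply measure_mono
    rintro x ⟨hxA, hxS, hxC⟩
    refine ⟨hxA, ?_⟩
    simp only [mem_setOf_eq] at hxS ⊢
    rcases Nat.eq_zero_or_pos k with rfl | hk0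
    · exact absurd hxA.2 (by rw [S_zero]; linarith)
    · obtain ⟨j, rfl⟩ : ∃ j, k = j + 1 := ⟨k - 1, by omega⟩
      have hjN : j < N := by omega
      have hxj : S N j x < a := hxA.1 j (Nat.lt_succ_self j)
      have habs : |x ⟨j, hjN⟩| ≤ ε := by
        by_contra hcon
        exact hxC ⟨⟨j, hjN⟩, lt_of_not_ge hcon⟩
      have := S_succ hjN x
      have hxle : x ⟨j, hjN⟩ ≤ ε := le_trans (le_abs_self _) habs
      linarith
  have h2 : μ D ≤ μ (H N a ∩ {x | S N N x < a}) := by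
    have : μ (H N a ∩ D) = μ D := by rw [Set.inter_eq_right.2 hDH]
    rw [← this, meas_H_inter hDm, meas_H_inter hTm]
    exact Finset.sum_le_sum hAD
  have h3 : μ {x | a + 2*ε ≤ S N N x} ≤ μ D + μ (Cset N ε) := by
    refine le_trans (measure_mono ?_) (measure_union_le D (Cset N ε))
    intro x hx
    by_cases hc : x ∈ Cset N ε
    · exact Or.inr hc
    · exact Or.inl ⟨hx, hc⟩
  have h4 : μ (H N a) = μ (H N a ∩ {x | S N N x < a}) + μ {x | a ≤ S N N x} := by
    rw [← measure_inter_add_diff (H N a) hTm, hdiff, h1]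
  calc μ {x | a ≤ S N N x} + μ {x | a + 2*ε ≤ S N N x}
      ≤ μ {x | a ≤ S N N x} + (μ D + μ (Cset N ε)) := add_le_add le_rfl h3
    _ ≤ μ {x | a ≤ S N N x} + (μ (H N a ∩ {x | S N N x < a}) + μ (Cset N ε)) :=
        add_le_add le_rfl (add_le_add h2 le_rfl)
    _ = μ (H N a) + μ (Cset N ε) := by rw [h4]; ring


/-- the dyadic-type grid: `tgrid τ N i = min i N * (τ / N)` -/
noncomputable def tgrid (τ : ℝ) (N : ℕ) (i : ℕ) : ℝ := ((min i N : ℕ) : ℝ) * (τ / N)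

variable {Ω : Type*} [MeasurableSpace Ω] {P : Measure Ω} [IsProbabilityMeasure P]
  {W : ℝ → Ω → ℝ} {τ : ℝ} {N : ℕ}

noncomputable def Δvec (W : ℝ → Ω → ℝ) (τ : ℝ) (N : ℕ) : Ω → Fin N → ℝ :=
  fun ω i => W (tgrid τ N ((i : ℕ) + 1)) ω - W (tgrid τ N (i : ℕ)) ω

lemma tgrid_mono (hτ : 0 ≤ τ) : Monotone (tgrid τ N) := by
  intro i j hij
  unfold tgrid
  have : ((min i N : ℕ) : ℝ) ≤ ((min j N : ℕ) : ℝ) :=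
    Nat.cast_le.2 (min_le_min hij le_rfl)
  have hτN : 0 ≤ τ / N := div_nonneg hτ (Nat.cast_nonneg N)
  exact mul_le_mul_of_nonneg_right this hτN

lemma tgrid_zero : tgrid τ N 0 = 0 := by simp [tgrid]

lemma tgrid_nonneg (hτ : 0 ≤ τ) (i : ℕ) : 0 ≤ tgrid τ N i := by
  have := tgrid_mono (τ := τ) (N := N) hτ (Nat.zero_le i)
  rwa [tgrid_zero] at this

lemma tgrid_top (hN : 0 < N) : tgrid τ N N = τ := by
  unfold tgrid
  rw [min_self]
  field_simp

lemma tgrid_le (hτ : 0 ≤ τ) (i : ℕ) : tgrid τ N i ≤ τ := by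
  rcases Nat.eq_zero_or_pos N with rfl | hN
  · simpa [tgrid] using hτ
  · unfold tgrid
    have h1 : ((min i N : ℕ) : ℝ) ≤ (N : ℝ) := Nat.cast_le.2 (min_le_right i N)
    have h2 : (0:ℝ) < N := Nat.cast_pos.2 hN
    calc ((min i N : ℕ) : ℝ) * (τ / N) ≤ (N : ℝ) * (τ / N) :=
          mul_le_mul_of_nonneg_right h1 (div_nonneg hτ h2.le)
      _ = τ := by field_simp

lemma tgrid_step {i : ℕ} (hi : i < N) : tgrid τ N (i + 1) - tgrid τ N i = τ / N := by
  unfold tgrid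
  have h1 : min (i+1) N = i+1 := min_eq_left (Nat.succ_le_of_lt hi)
  have h2 : min i N = i := min_eq_left hi.le
  rw [h1, h2]
  push_cast
  ring

lemma measurable_Δvec (hW : ∀ t, Measurable (W t)) : Measurable (Δvec W τ N) := by
  apply measurable_pi_lambda
  intro i
  exact (hW _).sub (hW _)

lemma law_Δvec (hWm : ∀ t, Measurable (W t))
    (hWg : ∀ s t : ℝ, 0 ≤ s → s ≤ t →
      Measure.map (fun ω => W t ω - W s ω) P = gaussianReal 0 ((t - s).toNNReal))
    (hWi : ∀ (n : ℕ) (t : ℕ → ℝ), Monotone t → 0 ≤ t 0 →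
      iIndepFun
        (fun (i : Fin n) ω => W (t (i + 1)) ω - W (t i) ω) P)
    (hτ : 0 < τ) (hN : 0 < N) :
    Measure.map (Δvec W τ N) P = μpi N ((τ / N).toNNReal) := by
  symm
  unfold μpi
  apply Measure.pi_eq
  intro s hs
  rw [Measure.map_apply (measurable_Δvec hWm) (MeasurableSet.univ_pi hs)]
  have hind := hWi N (tgrid τ N) (tgrid_mono hτ.le) (le_of_eq tgrid_zero.symm)
  have hpre : (Δvec W τ N) ⁻¹' (Set.pi univ s) =
      ⋂ i ∈ Finset.univ, (fun ω => W (tgrid τ N ((i : Fin N) + 1)) ω - W (tgrid τ N (i : Fin N)) ω) ⁻¹' s i := by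
    ext ω
    simp [Δvec, Set.mem_pi]
  rw [hpre, hind.measure_inter_preimage_eq_mul Finset.univ (fun i _ => hs i)]
  refine Finset.prod_congr rfl fun i _ => ?_
  have hmarg := hWg (tgrid τ N i) (tgrid τ N ((i : ℕ) + 1)) (tgrid_nonneg hτ.le _)
    (tgrid_mono hτ.le (Nat.le_succ _))
  rw [tgrid_step i.2] at hmarg
  rw [← Measure.map_apply (f := fun ω => W (tgrid τ N ((i : ℕ) + 1)) ω - W (tgrid τ N (i : ℕ)) ω)
    ((hWm _).sub (hWm _)) (hs i), hmarg]


-- new content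
def UE (W : ℝ → Ω → ℝ) (τ : ℝ) (N : ℕ) (b : ℝ) : Set Ω :=
  {ω | ∃ k ≤ N, b ≤ W (tgrid τ N k) ω - W 0 ω}

def CE (W : ℝ → Ω → ℝ) (τ : ℝ) (N : ℕ) (ε : ℝ) : Set Ω :=
  {ω | ∃ i : Fin N, ε < |W (tgrid τ N ((i : ℕ) + 1)) ω - W (tgrid τ N (i : ℕ)) ω|}

lemma S_Δvec (ω : Ω) : ∀ k, k ≤ N → S N k (Δvec W τ N ω) = W (tgrid τ N k) ω - W 0 ω := by
  intro k
  induction k with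
  | zero => intro _; rw [S_zero, tgrid_zero]; ring
  | succ k ih =>
    intro hk
    have hkN : k < N := hk
    rw [S_succ hkN, ih (le_of_lt hkN)]
    show _ + Δvec W τ N ω ⟨k, hkN⟩ = _
    unfold Δvec
    simp only
    ring

lemma UE_preimage : UE W τ N b = Δvec W τ N ⁻¹' H N b := by
  ext ω
  simp only [UE, H, mem_setOf_eq, mem_preimage]
  constructor
  · rintro ⟨k, hk, hb⟩; exact ⟨k, hk, by rw [S_Δvec ω k hk]; exact hb⟩
  · rintro ⟨k, hk, hb⟩; exact ⟨k, hk, by rw [← S_Δvec ω k hk]; exact hb⟩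

lemma CE_preimage {ε : ℝ} : CE W τ N ε = Δvec W τ N ⁻¹' Cset N ε := rfl

lemma Yτ_preimage (hN : 0 < N) {b : ℝ} :
    {ω | b ≤ W τ ω - W 0 ω} = Δvec W τ N ⁻¹' {x | b ≤ S N N x} := by
  ext ω
  simp only [mem_setOf_eq, mem_preimage, S_Δvec ω N le_rfl, tgrid_top hN]

variable [IsProbabilityMeasure P]

lemma P_UE_le (hW : ∀ t, Measurable (W t))
    (hWg : ∀ s t : ℝ, 0 ≤ s → s ≤ t →
      Measure.map (fun ω => W t ω - W s ω) P = gaussianReal 0 ((t - s).toNNReal))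
    (hWi : ∀ (n : ℕ) (t : ℕ → ℝ), Monotone t → 0 ≤ t 0 →
      iIndepFun
        (fun (i : Fin n) ω => W (t (i + 1)) ω - W (t i) ω) P)
    (hτ : 0 < τ) (hN : 0 < N) (b : ℝ) :
    P (UE W τ N b) ≤ 2 * P {ω | b ≤ W τ ω - W 0 ω} := by
  have hlaw := law_Δvec hW hWg hWi hτ hN
  rw [UE_preimage, Yτ_preimage hN,
    ← Measure.map_apply (measurable_Δvec hW) (measurableSet_H N b),
    ← Measure.map_apply (measurable_Δvec hW)
      (measurableSet_le measurable_const (measurable_S N N)), hlaw]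
  exact upper_bound

lemma P_UE_ge (hW : ∀ t, Measurable (W t))
    (hWg : ∀ s t : ℝ, 0 ≤ s → s ≤ t →
      Measure.map (fun ω => W t ω - W s ω) P = gaussianReal 0 ((t - s).toNNReal))
    (hWi : ∀ (n : ℕ) (t : ℕ → ℝ), Monotone t → 0 ≤ t 0 →
      iIndepFun
        (fun (i : Fin n) ω => W (t (i + 1)) ω - W (t i) ω) P)
    (hτ : 0 < τ) (hN : 0 < N) {b ε : ℝ} (hb : 0 < b) (hε : 0 < ε) :
    P {ω | b ≤ W τ ω - W 0 ω} + P {ω | b + 2*ε ≤ W τ ω - W 0 ω}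
      ≤ P (UE W τ N b) + P (CE W τ N ε) := by
  have hlaw := law_Δvec hW hWg hWi hτ hN
  rw [UE_preimage, CE_preimage, Yτ_preimage hN (b := b), Yτ_preimage hN (b := b + 2*ε),
    ← Measure.map_apply (measurable_Δvec hW) (measurableSet_H N b),
    ← Measure.map_apply (measurable_Δvec hW) (measurableSet_Cset N ε),
    ← Measure.map_apply (measurable_Δvec hW)
      (measurableSet_le measurable_const (measurable_S N N)),
    ← Measure.map_apply (measurable_Δvec hW)
      (measurableSet_le measurable_const (measurable_S N N)), hlaw]
  exact lower_bound hb hε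


/-- the hitting event of the statement -/
def Eev (W : ℝ → Ω → ℝ) (τ a : ℝ) : Set Ω :=
  {ω | sInf {t : ℝ | 0 ≤ t ∧ W t ω = a} ≤ τ ∧ {t : ℝ | 0 ≤ t ∧ W t ω = a}.Nonempty}

lemma UE_mono (hτ : 0 ≤ τ) {b : ℝ} {m : ℕ} : UE W τ (2^m) b ⊆ UE W τ (2^(m+1)) b := by
  rintro ω ⟨k, hk, hb⟩
  refine ⟨2*k, by omega, ?_⟩
  have : tgrid τ (2^(m+1)) (2*k) = tgrid τ (2^m) k := by
    unfold tgrid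
    rw [min_eq_left hk, min_eq_left (by omega : 2*k ≤ 2^(m+1))]
    push_cast [pow_succ]
    field_simp
  rwa [this]

lemma path_UE_subset_E (hτ : 0 < τ) (ha : 0 < a)
    (hc : Continuous (fun t => W t ω)) (h0 : W 0 ω = 0)
    (hU : ω ∈ UE W τ N a) : ω ∈ Eev W τ a := by
  obtain ⟨k, _, hak⟩ := hU
  rw [h0, sub_zero] at hak
  have hk0 : (0:ℝ) ≤ tgrid τ N k := tgrid_nonneg hτ.le k
  have hIVT := intermediate_value_Icc hk0 (hc.continuousOn (s := Icc 0 (tgrid τ N k)))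
  have haI : a ∈ Icc (W 0 ω) (W (tgrid τ N k) ω) := by
    rw [h0]; exact ⟨ha.le, hak⟩
  obtain ⟨t, htI, htW⟩ := hIVT haI
  have htS : t ∈ {t : ℝ | 0 ≤ t ∧ W t ω = a} := ⟨htI.1, htW⟩
  constructor
  · refine le_trans (csInf_le ⟨0, fun u hu => hu.1⟩ htS) ?_
    exact le_trans htI.2 (tgrid_le hτ.le k)
  · exact ⟨t, htS⟩

lemma path_E_subset (hτ : 0 < τ) (ha : 0 < a) {a' : ℝ} (ha' : a' < a)
    (hc : Continuous (fun t => W t ω)) (h0 : W 0 ω = 0)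
    (hE : ω ∈ Eev W τ a) : ∃ m : ℕ, ω ∈ UE W τ (2^m) a' := by
  obtain ⟨hinf, hne⟩ := hE
  set Sω := {t : ℝ | 0 ≤ t ∧ W t ω = a} with hSω
  have hclosed : IsClosed Sω := by
    have : Sω = Ici 0 ∩ (fun t => W t ω) ⁻¹' {a} := by
      ext t; simp [hSω, mem_preimage]
    rw [this]
    exact isClosed_Ici.inter (isClosed_singleton.preimage hc)
  have hbdd : BddBelow Sω := ⟨0, fun u hu => hu.1⟩
  have hmem : sInf Sω ∈ Sω := hclosed.csInf_mem hne hbdd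
  set t₀ := sInf Sω with ht₀
  have ht₀0 : 0 ≤ t₀ := hmem.1
  have ht₀W : W t₀ ω = a := hmem.2
  have ht₀pos : 0 < t₀ := by
    rcases ht₀0.lt_or_eq with h | h
    · exact h
    · exfalso; rw [← h] at ht₀W; rw [h0] at ht₀W; linarith
  -- find δ-neighbourhood where W > a'
  have hopen : IsOpen {s : ℝ | a' < W s ω} := isOpen_lt continuous_const hc
  have ht₀mem : t₀ ∈ {s : ℝ | a' < W s ω} := by simp only [mem_setOf_eq, ht₀W]; exact ha'
  obtain ⟨δ, hδpos, hball⟩ := Metric.isOpen_iff.1 hopen t₀ ht₀mem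
  set c := min δ t₀ with hc'
  have hcpos : 0 < c := lt_min hδpos ht₀pos
  obtain ⟨m, hm⟩ := pow_unbounded_of_one_lt (τ / c) (one_lt_two (α := ℝ))
  refine ⟨m, ?_⟩
  have h2m : (0:ℝ) < 2^m := by positivity
  have hτ2m : τ / 2^m < c := by
    rw [div_lt_iff₀ h2m]
    calc τ = (τ / c) * c := by field_simp
    _ < 2^m * c := by exact mul_lt_mul_of_pos_right hm hcpos
    _ = c * 2^m := mul_comm _ _
  -- choose k = ⌊t₀ * 2^m / τ⌋₊
  set q : ℝ := t₀ * 2^m / τ with hq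
  have hqpos : 0 ≤ q := by positivity
  set k := ⌊q⌋₊ with hk
  have hkq : (k:ℝ) ≤ q := Nat.floor_le hqpos
  have hqk : q < k + 1 := Nat.lt_floor_add_one q
  have hkN : k ≤ 2^m := by
    have hq2m : q ≤ 2^m := by
      rw [hq, div_le_iff₀ hτ]
      calc t₀ * 2^m ≤ τ * 2^m := by
            have := hinf
            nlinarith [hinf, h2m]
      _ = 2^m * τ := mul_comm _ _
    calc k = ⌊q⌋₊ := hk
    _ ≤ ⌊(2^m : ℝ)⌋₊ := Nat.floor_le_floor hq2m
    _ = 2^m := by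
        rw [show ((2:ℝ)^m) = ((2^m : ℕ) : ℝ) by push_cast; ring, Nat.floor_natCast]
  set sk := tgrid τ (2^m) k with hsk
  have hskval : sk = (k : ℝ) * (τ / 2^m) := by
    rw [hsk]; unfold tgrid; rw [min_eq_left hkN]; push_cast; ring
  have hkq' : (k:ℝ) * τ ≤ t₀ * 2^m := by
    rw [hq, le_div_iff₀ hτ] at hkq
    linarith
  have hsk_le : sk ≤ t₀ := by
    rw [hskval, show (k:ℝ) * (τ / 2^m) = (k * τ)/2^m by ring, div_le_iff₀ h2m]
    linarith
  have hqk' : t₀ * 2^m < ((k:ℝ)+1) * τ := by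
    rw [hq, div_lt_iff₀ hτ] at hqk
    linarith
  have h3 : t₀ < ((k:ℝ)+1)*(τ/2^m) := by
    rw [show ((k:ℝ)+1) * (τ / 2^m) = (((k:ℝ)+1) * τ)/2^m by ring, lt_div_iff₀ h2m]
    linarith
  have hsk_gt : t₀ - sk < c := by
    rw [hskval]
    have := hτ2m
    nlinarith
  have hdist : dist sk t₀ < δ := by
    rw [Real.dist_eq, abs_sub_lt_iff]
    constructor
    · linarith [hsk_gt, min_le_left δ t₀]
    · linarith [hsk_gt, min_le_left δ t₀, hsk_le]
  have hWsk : a' < W sk ω := hball hdist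
  exact ⟨k, hkN, by rw [h0, sub_zero]; exact hWsk.le⟩


lemma path_CE_eventually (hτ : 0 < τ) {ε : ℝ} (hε : 0 < ε)
    (hc : Continuous (fun t => W t ω)) :
    ∀ᶠ m in atTop, ω ∉ CE W τ (2^m) ε := by
  have hu : UniformContinuousOn (fun t => W t ω) (Icc 0 τ) :=
    isCompact_Icc.uniformContinuousOn_of_continuous hc.continuousOn
  rw [Metric.uniformContinuousOn_iff] at hu
  obtain ⟨δ, hδ, hδ'⟩ := hu ε hε
  obtain ⟨m₀, hm₀⟩ := pow_unbounded_of_one_lt (τ/δ) (one_lt_two (α := ℝ))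
  rw [eventually_atTop]
  refine ⟨m₀, fun m hm => ?_⟩
  rintro ⟨i, hi⟩
  have h2m : (0:ℝ) < 2^m := by positivity
  have h2m' : (2:ℝ)^m₀ ≤ 2^m := by
    apply pow_le_pow_right₀ one_le_two hm
  have hδτ : τ / 2^m < δ := by
    rw [div_lt_iff₀ h2m]
    have h0 : (0:ℝ) < 2^m₀ := by positivity
    have : τ < δ * 2^m₀ := by
      rw [div_lt_iff₀ hδ] at hm₀
      linarith
    calc τ < δ * 2^m₀ := this
    _ ≤ δ * 2^m := by nlinarith
  have hmem1 : tgrid τ (2^m) ((i:ℕ)+1) ∈ Icc 0 τ := ⟨tgrid_nonneg hτ.le _, tgrid_le hτ.le _⟩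
  have hmem2 : tgrid τ (2^m) (i:ℕ) ∈ Icc 0 τ := ⟨tgrid_nonneg hτ.le _, tgrid_le hτ.le _⟩
  have hdist : dist (tgrid τ (2^m) ((i:ℕ)+1)) (tgrid τ (2^m) (i:ℕ)) < δ := by
    rw [Real.dist_eq]
    have hstep := tgrid_step (τ := τ) (N := 2^m) (i := (i:ℕ)) (by exact_mod_cast i.2)
    rw [hstep]
    push_cast
    rw [abs_of_nonneg (by positivity : (0:ℝ) ≤ τ / 2^m)]
    exact hδτ
  have := hδ' _ hmem1 _ hmem2 hdist
  rw [Real.dist_eq] at this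
  exact absurd this (not_lt.2 hi.le)


lemma tendsto_measure_of_ae_eventually_notMem {Ω : Type*} [MeasurableSpace Ω] {P : Measure Ω}
    [IsFiniteMeasure P] {A : ℕ → Set Ω} (hA : ∀ m, MeasurableSet (A m))
    (h : ∀ᵐ ω ∂P, ∀ᶠ m in atTop, ω ∉ A m) :
    Tendsto (fun m => P (A m)) atTop (𝓝 0) := by
  set D : ℕ → Set Ω := fun m => ⋃ k, A (m + k) with hD
  have hDanti : Antitone D := by
    intro m n hmn
    refine iUnion_subset fun k => ?_
    have : n + k = m + (n - m + k) := by omega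
    rw [this]
    exact subset_iUnion (fun j => A (m + j)) (n - m + k)
  have hDmeas : ∀ m, NullMeasurableSet (D m) P :=
    fun m => (MeasurableSet.iUnion fun k => hA _).nullMeasurableSet
  have hnull : P (⋂ m, D m) = 0 := by
    rw [ae_iff] at h
    refine measure_mono_null ?_ h
    intro ω hω
    simp only [mem_iInter, hD, mem_iUnion] at hω
    simp only [mem_setOf_eq, not_eventually]
    rw [frequently_atTop]
    intro m
    obtain ⟨k, hk⟩ := hω m
    exact ⟨m + k, by omega, not_not_intro hk⟩
  have htend := tendsto_measure_iInter_atTop hDmeas hDanti ⟨0, measure_ne_top P _⟩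
  rw [hnull] at htend
  have hle : ∀ m, P (A m) ≤ P (D m) := fun m =>
    measure_mono (by simpa using subset_iUnion (fun k => A (m + k)) 0)
  exact tendsto_of_tendsto_of_tendsto_of_le_of_le tendsto_const_nhds htend
    (fun m => zero_le) hle

lemma tendsto_Ici_above (ν : Measure ℝ) [IsFiniteMeasure ν] (a : ℝ) :
    Tendsto (fun n : ℕ => ν (Ici (a - 1/(n+1)))) atTop (𝓝 (ν (Ici a))) := by
  have hanti : Antitone (fun n : ℕ => Ici (a - 1/((n:ℝ)+1))) := by
    intro n m hnm
    apply Ici_subset_Ici.2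
    have h1 : (1:ℝ)/((m:ℝ)+1) ≤ 1/((n:ℝ)+1) := by
      apply one_div_le_one_div_of_le
      · positivity
      · have := (Nat.cast_le (α := ℝ)).2 hnm; linarith
    linarith
  have hInter : (⋂ n : ℕ, Ici (a - 1/((n:ℝ)+1))) = Ici a := by
    ext x
    simp only [mem_iInter, mem_Ici]
    constructor
    · intro hx
      by_contra hlt
      push_neg at hlt
      obtain ⟨n, hn⟩ := exists_nat_one_div_lt (sub_pos.2 hlt)
      have := hx n
      linarith
    · intro hx n
      have : (0:ℝ) < 1/((n:ℝ)+1) := by positivity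
      linarith
  have := tendsto_measure_iInter_atTop (μ := ν)
    (fun n => measurableSet_Ici.nullMeasurableSet) hanti ⟨0, measure_ne_top ν _⟩
  rwa [hInter] at this

lemma tendsto_Ici_below (ν : Measure ℝ) [IsFiniteMeasure ν] (a : ℝ) :
    Tendsto (fun n : ℕ => ν (Ici (a + 2*(1/(n+1))))) atTop (𝓝 (ν (Ioi a))) := by
  have hmono : Monotone (fun n : ℕ => Ici (a + 2*(1/((n:ℝ)+1)))) := by
    intro n m hnm
    apply Ici_subset_Ici.2
    have h1 : (1:ℝ)/((m:ℝ)+1) ≤ 1/((n:ℝ)+1) := by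
      apply one_div_le_one_div_of_le
      · positivity
      · have := (Nat.cast_le (α := ℝ)).2 hnm; linarith
    linarith
  have hUnion : (⋃ n : ℕ, Ici (a + 2*(1/((n:ℝ)+1)))) = Ioi a := by
    ext x
    simp only [mem_iUnion, mem_Ici, mem_Ioi]
    constructor
    · rintro ⟨n, hn⟩
      have : (0:ℝ) < 1/((n:ℝ)+1) := by positivity
      linarith
    · intro hx
      obtain ⟨n, hn⟩ := exists_nat_one_div_lt (by linarith : (0:ℝ) < (x - a)/2)
      exact ⟨n, by linarith⟩
  have := tendsto_measure_iUnion_atTop (μ := ν) hmono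
  rwa [hUnion] at this

lemma Ici_eq_Ioi_of_atom_zero {ν : Measure ℝ} {a : ℝ} (h : ν {a} = 0) :
    ν (Ici a) = ν (Ioi a) := by
  apply le_antisymm
  · have hsub : Ici a ⊆ Ioi a ∪ {a} := by
      intro x hx
      rcases eq_or_lt_of_le (mem_Ici.1 hx) with h' | h'
      · exact Or.inr (by simp [← h'])
      · exact Or.inl h'
    calc ν (Ici a) ≤ ν (Ioi a ∪ {a}) := measure_mono hsub
    _ ≤ ν (Ioi a) + ν {a} := measure_union_le _ _
    _ = ν (Ioi a) := by rw [h, add_zero]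
  · exact measure_mono Ioi_subset_Ici_self


end BMRefl
end BMReflPrelude

/-- Reflection principle: for a standard Brownian motion `W` and `a > 0`, the first
hitting time `T_a = inf{t ≥ 0 : W(t) = a}` satisfies `P(T_a ≤ τ) = 2 P(W(τ) ≥ a)`
for every `τ > 0`. -/
theorem stmt1 {Ω : Type*} [MeasurableSpace Ω] (P : Measure Ω) [IsProbabilityMeasure P]
    (W : ℝ → Ω → ℝ) (hW : IsBrownianMotion P W) (a : ℝ) (ha : 0 < a) :
    ∀ τ : ℝ, 0 < τ →
      P {ω | sInf {t : ℝ | 0 ≤ t ∧ W t ω = a} ≤ τ ∧ {t : ℝ | 0 ≤ t ∧ W t ω = a}.Nonempty} =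
        2 * P {ω | a ≤ W τ ω} := by
  classical
  intro τ hτ
  open ProbabilityTheory Set Filter BMRefl in
  open scoped Topology in
  obtain ⟨hWm, hW0, hWc, hWg, hWi⟩ := hW
  have hG : ∀ᵐ ω ∂P, W 0 ω = 0 ∧ Continuous fun t => W t ω := hW0.and hWc
  set ν := gaussianReal 0 (τ.toNNReal) with hν
  have hνatom : ν {a} = 0 :=
    gaussianReal_absolutelyContinuous 0 (Real.toNNReal_pos.2 hτ).ne' (measure_singleton a)
  have hmapY : Measure.map (fun ω => W τ ω - W 0 ω) P = ν := by
    have := hWg 0 τ le_rfl hτ.le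
    rwa [sub_zero] at this
  have hYmeas : Measurable (fun ω => W τ ω - W 0 ω) := (hWm τ).sub (hWm 0)
  have PY : ∀ b : ℝ, P {ω | b ≤ W τ ω - W 0 ω} = ν (Ici b) := by
    intro b
    have h' : {ω | b ≤ W τ ω - W 0 ω} = (fun ω => W τ ω - W 0 ω) ⁻¹' (Ici b) := rfl
    rw [h', ← Measure.map_apply hYmeas measurableSet_Ici, hmapY]
  have hup : ∀ a' : ℝ, a' < a → P (Eev W τ a) ≤ 2 * ν (Ici a') := by
    intro a' ha'
    have hsub : ∀ᵐ ω ∂P, ω ∈ Eev W τ a → ω ∈ ⋃ m : ℕ, UE W τ (2^m) a' := by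
      filter_upwards [hG] with ω hω hE
      obtain ⟨m, hm⟩ := path_E_subset hτ ha ha' hω.2 hω.1 hE
      exact mem_iUnion.2 ⟨m, hm⟩
    have h1 : P (Eev W τ a) ≤ P (⋃ m : ℕ, UE W τ (2^m) a') := measure_mono_ae hsub
    refine h1.trans ?_
    have hmono : Monotone (fun m : ℕ => UE W τ (2^m) a') :=
      monotone_nat_of_le_succ (fun m => UE_mono hτ.le)
    refine le_of_tendsto (tendsto_measure_iUnion_atTop (μ := P) hmono)
      (Filter.Eventually.of_forall fun m => ?_)
    calc P (UE W τ (2^m) a') ≤ 2 * P {ω | a' ≤ W τ ω - W 0 ω} :=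
        P_UE_le hWm hWg hWi hτ (by positivity) a'
    _ = 2 * ν (Ici a') := by rw [PY]
  have hupper : P (Eev W τ a) ≤ 2 * ν (Ici a) := by
    have htt : Filter.Tendsto (fun n : ℕ => 2 * ν (Ici (a - 1/(n+1)))) atTop
        (𝓝 (2 * ν (Ici a))) :=
      ENNReal.Tendsto.const_mul (tendsto_Ici_above ν a) (Or.inr (by simp))
    refine ge_of_tendsto htt (Filter.Eventually.of_forall fun n => hup _ ?_)
    have h0 : (0:ℝ) < 1/((n:ℝ)+1) := by positivity
    linarith
  have hCEmeas : ∀ (m : ℕ) (ε : ℝ), MeasurableSet (CE W τ (2^m) ε) := by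
    intro m ε
    rw [CE_preimage]
    exact (measurableSet_Cset _ _).preimage (measurable_Δvec hWm)
  have hlow : 2 * ν (Ici a) ≤ P (Eev W τ a) := by
    have hstep : ∀ n : ℕ, ν (Ici a) + ν (Ici (a + 2*(1/(n+1)))) ≤ P (Eev W τ a) := by
      intro n
      set ε : ℝ := 1/((n:ℝ)+1) with hε'
      have hε : 0 < ε := by positivity
      have hCE0 : Filter.Tendsto (fun m => P (CE W τ (2^m) ε)) atTop (𝓝 0) := by
        apply tendsto_measure_of_ae_eventually_notMem (fun m => hCEmeas m ε)
        filter_upwards [hWc] with ω hc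
        exact path_CE_eventually hτ hε hc
      have hUEE : ∀ m : ℕ, P (UE W τ (2^m) a) ≤ P (Eev W τ a) := by
        intro m
        apply measure_mono_ae
        filter_upwards [hG] with ω hω hU
        exact path_UE_subset_E hτ ha hω.2 hω.1 hU
      have hbnd : ∀ m : ℕ, ν (Ici a) + ν (Ici (a + 2*ε)) ≤
          P (Eev W τ a) + P (CE W τ (2^m) ε) := by
        intro m
        calc ν (Ici a) + ν (Ici (a + 2*ε))
            = P {ω | a ≤ W τ ω - W 0 ω} + P {ω | a + 2*ε ≤ W τ ω - W 0 ω} := by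
              rw [PY, PY]
          _ ≤ P (UE W τ (2^m) a) + P (CE W τ (2^m) ε) :=
              P_UE_ge hWm hWg hWi hτ (by positivity) ha hε
          _ ≤ P (Eev W τ a) + P (CE W τ (2^m) ε) := add_le_add (hUEE m) le_rfl
      have htt : Filter.Tendsto (fun m => P (Eev W τ a) + P (CE W τ (2^m) ε)) atTop
          (𝓝 (P (Eev W τ a))) := by
        have h' := Filter.Tendsto.const_add (P (Eev W τ a)) hCE0
        simpa using h'
      exact ge_of_tendsto htt (Filter.Eventually.of_forall hbnd)
    have htt2 : Filter.Tendsto (fun n : ℕ => ν (Ici a) + ν (Ici (a + 2*(1/(n+1))))) atTop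
        (𝓝 (ν (Ici a) + ν (Ioi a))) :=
      Filter.Tendsto.const_add _ (tendsto_Ici_below ν a)
    have h2 : ν (Ici a) + ν (Ioi a) ≤ P (Eev W τ a) :=
      le_of_tendsto htt2 (Filter.Eventually.of_forall hstep)
    calc 2 * ν (Ici a) = ν (Ici a) + ν (Ici a) := two_mul _
    _ = ν (Ici a) + ν (Ioi a) := by rw [Ici_eq_Ioi_of_atom_zero hνatom]
    _ ≤ P (Eev W τ a) := h2
  have hRHS : P {ω | a ≤ W τ ω} = ν (Ici a) := by
    have hae : {ω | a ≤ W τ ω} =ᵐ[P] {ω | a ≤ W τ ω - W 0 ω} := by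
      apply Filter.eventuallyEq_set.2
      filter_upwards [hW0] with ω h0
      rw [h0, sub_zero]
    rw [measure_congr hae, PY]
  show P (Eev W τ a) = 2 * P {ω | a ≤ W τ ω}
  rw [hRHS]
  exact le_antisymm hupper hlow
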